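/- arXiv:1308.6514 — 3 statements merged into one kernel-verified Lean document; each statement's English description precedes it below -/
import Mathlib

section
/- Let c : X × Ω → ℝ be a normalized Lipschitz cost and π a fixed point of L̂_c^*. Then the support of π is all of X × Ω; in particular π gives positive measure to every set of the form {x₀} × A where A is a nonempty cylinder in Ω. -/
open MeasureTheory Filter Topology

attribute [local instance] PiNat.dist

/-- The Bernoulli space `{1,...,d}^ℕ`, with the metric `dist z y = (1/2)^n` where `n`
is the first coordinate at which `z` and `y` differ (provided by `PiNat.dist`). -/
abbrev W (d : ℕ) : Type := ℕ → Fin d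

/-- The shift map `σ` on the Bernoulli space. -/
def shift {d : ℕ} (y : W d) : W d := fun n => y (n + 1)

/-- Prepend the symbol `a` to the sequence `y`, i.e. the point `a y` (a preimage of `y`
under the shift). -/
def cons {d : ℕ} (a : Fin d) (y : W d) : W d := fun n =>
  match n with
  | 0 => a
  | Nat.succ k => y k

variable {X : Type*} [Fintype X] [MeasurableSpace X] [TopologicalSpace X] {d : ℕ}

/-- `π ∈ Π(·,σ)`: a Borel probability on `X × Ω` whose `y`-marginal is `σ`-invariant. -/
def IsPlan (π : Measure (X × W d)) : Prop :=
  IsProbabilityMeasure π ∧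
    ∀ g : W d → ℝ, Continuous g → ∫ p, g (shift p.2) ∂π = ∫ p, g p.2 ∂π

/-- A cost `c` is normalized if `∑_{x ∈ X} ∑_{σ w = y} e^{c(x,w)} = 1` for every `y`. -/
def IsNormalized (c : X × W d → ℝ) : Prop :=
  ∀ y : W d, ∑ x : X, ∑ a : Fin d, Real.exp (c (x, cons a y)) = 1

/-- `π` is a fixed point of the dual transfer operator `L̂_c^*`, i.e. a Gibbs plan for `c`. -/
def GibbsFixed (c : X × W d → ℝ) (π : Measure (X × W d)) : Prop :=
  ∀ u : X × W d → ℝ, Continuous u →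
    ∫ p, u p ∂π =
      ∫ p, ∑ x : X, ∑ a : Fin d,
        Real.exp (c (x, cons a p.2)) * u (x, cons a p.2) ∂π

/-- `c` is a Lipschitz cost: Lipschitz in the `Ω` variable, uniformly in `x ∈ X`. -/
def LipCost (c : X × W d → ℝ) : Prop :=
  ∃ K : ℝ, ∀ (x : X) (y z : W d), |c (x, y) - c (x, z)| ≤ K * dist y z

/-- The entropy of a plan: `H(π) = inf { -∫ b dπ : b normalized }`. -/
noncomputable def Hent (π : Measure (X × W d)) : ℝ :=
  sInf {r | ∃ b : X × W d → ℝ, LipCost b ∧ IsNormalized b ∧ r = -∫ p, b p ∂π}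

/-- The pressure `P(c) = sup_{π ∈ Π(·,σ)} ∫ c dπ + H(π)`. -/
noncomputable def Pr (c : X × W d → ℝ) : ℝ :=
  sSup {r | ∃ π : Measure (X × W d), IsPlan π ∧ r = ∫ p, c p ∂π + Hent π}

/-- The cylinder in `Ω` determined by a finite word `s`. -/
def cylOf {d : ℕ} (s : List (Fin d)) : Set (W d) :=
  {y | ∀ i, (h : i < s.length) → y i = s.get ⟨i, h⟩}

section AuxGibbs

set_option linter.unusedSectionVars false
set_option maxHeartbeats 800000

lemma continuous_cons (a : Fin d) : Continuous (cons a : W d → W d) := by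
  refine continuous_pi fun n => ?_
  cases n with
  | zero => exact continuous_const
  | succ k => exact continuous_apply k

/-- Prepend a finite word to a sequence. -/
def app : List (Fin d) → W d → W d
  | [], y => y
  | a :: t, y => cons a (app t y)

lemma app_mem_cyl (s : List (Fin d)) (y : W d) : app s y ∈ cylOf s := by
  induction s generalizing y with
  | nil => intro i h; simp at h
  | cons a t ih =>
    intro i h
    cases i with
    | zero => rfl
    | succ j =>
      have hj : j < t.length := by simpa using h
      have := ih y j hj
      simpa [app, cons] using this

/-- The transfer operator associated to the cost `c`. -/
noncomputable def Tc (c v : X × W d → ℝ) : X × W d → ℝ :=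
  fun p => ∑ x : X, ∑ a : Fin d, Real.exp (c (x, cons a p.2)) * v (x, cons a p.2)

lemma Tc_cont {c v : X × W d → ℝ} (hc : Continuous c) (hv : Continuous v) :
    Continuous (Tc c v) := by
  refine continuous_finset_sum _ fun x _ => continuous_finset_sum _ fun a _ => ?_
  have hmap : Continuous fun p : X × W d => ((x, cons a p.2) : X × W d) :=
    continuous_const.prodMk ((continuous_cons a).comp continuous_snd)
  exact (Real.continuous_exp.comp (hc.comp hmap)).mul (hv.comp hmap)

lemma Tc_meas {c v : X × W d → ℝ} (hc : Continuous c) (hv : Continuous v) :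
    Measurable (Tc c v) := by
  refine Finset.measurable_sum _ fun x _ => Finset.measurable_sum _ fun a _ => ?_
  have hg : Continuous fun y : W d => Real.exp (c (x, cons a y)) * v (x, cons a y) := by
    have hmap : Continuous fun y : W d => ((x, cons a y) : X × W d) :=
      continuous_const.prodMk (continuous_cons a)
    exact (Real.continuous_exp.comp (hc.comp hmap)).mul (hv.comp hmap)
  exact hg.measurable.comp measurable_snd

lemma Tc_nonneg {c v : X × W d → ℝ} (hv : ∀ p, 0 ≤ v p) (p : X × W d) : 0 ≤ Tc c v p :=
  Finset.sum_nonneg fun _ _ => Finset.sum_nonneg fun _ _ =>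
    mul_nonneg (Real.exp_nonneg _) (hv _)

lemma Tc_iter_cont {c : X × W d → ℝ} (hc : Continuous c) {u : X × W d → ℝ}
    (hu : Continuous u) (n : ℕ) : Continuous ((Tc c)^[n] u) := by
  induction n with
  | zero => exact hu
  | succ n ih => rw [Function.iterate_succ_apply']; exact Tc_cont hc ih

lemma Tc_single {c : X × W d → ℝ} {M : ℝ} (hM : ∀ p, -M ≤ c p) (x₀ : X) (a : Fin d)
    (v : X × W d → ℝ) (hv : ∀ p, 0 ≤ v p) (y : W d) (x : X) :
    Real.exp (-M) * v (x₀, cons a y) ≤ Tc c v (x, y) := by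
  have h1 : Real.exp (-M) * v (x₀, cons a y)
      ≤ Real.exp (c (x₀, cons a y)) * v (x₀, cons a y) :=
    mul_le_mul_of_nonneg_right (Real.exp_le_exp.2 (hM _)) (hv _)
  have h2 : Real.exp (c (x₀, cons a y)) * v (x₀, cons a y)
      ≤ ∑ b : Fin d, Real.exp (c (x₀, cons b y)) * v (x₀, cons b y) :=
    Finset.single_le_sum (f := fun b : Fin d => Real.exp (c (x₀, cons b y)) * v (x₀, cons b y))
      (fun b _ => mul_nonneg (Real.exp_nonneg _) (hv _)) (Finset.mem_univ a)
  have h3 : ∑ b : Fin d, Real.exp (c (x₀, cons b y)) * v (x₀, cons b y)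
      ≤ ∑ x' : X, ∑ b : Fin d, Real.exp (c (x', cons b y)) * v (x', cons b y) :=
    Finset.single_le_sum
      (f := fun x' : X => ∑ b : Fin d, Real.exp (c (x', cons b y)) * v (x', cons b y))
      (fun x' _ => Finset.sum_nonneg fun b _ => mul_nonneg (Real.exp_nonneg _) (hv _))
      (Finset.mem_univ x₀)
  exact (h1.trans h2).trans h3

lemma Tc_iter_bound {c : X × W d → ℝ} {M : ℝ} (hM : ∀ p, -M ≤ c p) (x₀ : X) :
    ∀ (t : List (Fin d)) (a : Fin d) (v : X × W d → ℝ), (∀ p, 0 ≤ v p) → ∀ p : X × W d,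
      Real.exp (-(M * ((a :: t).length : ℕ))) * v (x₀, app (a :: t) p.2)
        ≤ (Tc c)^[(a :: t).length] v p := by
  intro t
  induction t with
  | nil =>
    intro a v hv p
    have := Tc_single hM x₀ a v hv p.2 p.1
    simpa [app, Tc] using this
  | cons b t' ih =>
    intro a v hv p
    have hTv : ∀ q, 0 ≤ Tc c v q := Tc_nonneg hv
    have h1 := ih b (Tc c v) hTv p
    have h2 : Real.exp (-M) * v (x₀, app (a :: b :: t') p.2)
        ≤ Tc c v (x₀, app (b :: t') p.2) := by
      have := Tc_single hM x₀ a v hv (app (b :: t') p.2) x₀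
      simpa [app] using this
    have hexp : Real.exp (-(M * ((a :: b :: t').length : ℕ)))
        = Real.exp (-(M * ((b :: t').length : ℕ))) * Real.exp (-M) := by
      rw [← Real.exp_add]; congr 1
      have hl : (((a :: b :: t').length : ℕ) : ℝ) = (((b :: t').length : ℕ) : ℝ) + 1 := by
        norm_cast
      rw [hl]; ring
    calc Real.exp (-(M * ((a :: b :: t').length : ℕ))) * v (x₀, app (a :: b :: t') p.2)
        = Real.exp (-(M * ((b :: t').length : ℕ)))
            * (Real.exp (-M) * v (x₀, app (a :: b :: t') p.2)) := by rw [hexp]; ring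
      _ ≤ Real.exp (-(M * ((b :: t').length : ℕ))) * Tc c v (x₀, app (b :: t') p.2) :=
          mul_le_mul_of_nonneg_left h2 (Real.exp_nonneg _)
      _ ≤ (Tc c)^[(b :: t').length] (Tc c v) p := h1
      _ = (Tc c)^[(a :: b :: t').length] v p := by
          show (Tc c)^[(b :: t').length] (Tc c v) p = (Tc c)^[(b :: t').length + 1] v p
          rw [Function.iterate_succ_apply]

lemma isClopen_cylOf (s : List (Fin d)) : IsClopen (cylOf s) := by
  have h : cylOf s = ⋂ i : Fin s.length, (fun y : W d => y i) ⁻¹' {s.get i} := by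
    ext y
    constructor
    · intro hy
      simp only [Set.mem_iInter, Set.mem_preimage, Set.mem_singleton_iff]
      intro i; exact hy i i.2
    · intro hy i hi
      simp only [Set.mem_iInter, Set.mem_preimage, Set.mem_singleton_iff] at hy
      exact hy ⟨i, hi⟩
  rw [h]
  exact isClopen_iInter_of_finite fun i =>
    (isClopen_discrete _).preimage (continuous_apply (i : ℕ))

lemma measurableSet_cylOf (s : List (Fin d)) : MeasurableSet (cylOf s) := by
  have h : cylOf s = ⋂ i : Fin s.length, (fun y : W d => y i) ⁻¹' {s.get i} := by
    ext y
    constructor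
    · intro hy
      simp only [Set.mem_iInter, Set.mem_preimage, Set.mem_singleton_iff]
      intro i; exact hy i i.2
    · intro hy i hi
      simp only [Set.mem_iInter, Set.mem_preimage, Set.mem_singleton_iff] at hy
      exact hy ⟨i, hi⟩
  rw [h]
  exact MeasurableSet.iInter fun i =>
    (measurable_pi_apply (i : ℕ)) (measurableSet_singleton _)

end AuxGibbs

set_option maxHeartbeats 1000000 in
/-- A fixed point `pl` of `L̂_c^*` for a normalized Lipschitz cost has full support:
it gives positive measure to every set `{x₀} × A` with `A` a (nonempty) cylinder, and
more generally to every nonempty open set. -/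
theorem gibbs_plan_full_support
    [Nonempty X] [DiscreteTopology X]
    (c : X × W d → ℝ) (hc : Continuous c) (hlip : LipCost c) (hnorm : IsNormalized c)
    (pl : Measure (X × W d)) (hpl : IsProbabilityMeasure pl)
    (hfix : GibbsFixed c pl) :
    (∀ (x₀ : X) (s : List (Fin d)), 0 < pl ({x₀} ×ˢ cylOf s)) ∧
      ∀ U : Set (X × W d), IsOpen U → U.Nonempty → 0 < pl U := by
  classical
  -- `d = 0` is impossible, since then the whole space is empty.
  rcases Nat.eq_zero_or_pos d with hd | hd
  · exfalso
    subst hd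
    have hW : IsEmpty (W 0) := ⟨fun y => (y 0).elim0⟩
    have h1 : pl Set.univ = 1 := measure_univ
    have h0 : (Set.univ : Set (X × W 0)) = ∅ := by
      ext p; exact (hW.false p.2).elim
    rw [h0, measure_empty] at h1
    exact zero_ne_one h1
  have haFin : Nonempty (Fin d) := ⟨⟨0, hd⟩⟩
  obtain ⟨M, hM⟩ := isCompact_univ.exists_bound_of_continuousOn hc.continuousOn
  have hMc : ∀ p, -M ≤ c p := fun p =>
    neg_le_of_abs_le (by simpa [Real.norm_eq_abs] using hM p (Set.mem_univ p))
  -- Main claim: positive measure on `{x₀} × (nonempty cylinder)`.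
  have key : ∀ (x₀ : X) (a : Fin d) (t : List (Fin d)),
      0 < pl ({x₀} ×ˢ cylOf (a :: t)) := by
    intro x₀ a t
    set s : List (Fin d) := a :: t with hs
    set H : Set X := ⋂₀ {B : Set X | MeasurableSet B ∧ x₀ ∈ B} with hH
    have hHmeas : MeasurableSet H :=
      Set.Finite.measurableSet_sInter (Set.toFinite _) fun B hB => hB.1
    have hx₀H : x₀ ∈ H := fun B hB => hB.2
    have hAmeas : MeasurableSet (cylOf s) := measurableSet_cylOf s
    have hSmeas : MeasurableSet (H ×ˢ cylOf s) := hHmeas.prod hAmeas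
    have hSclopen : IsClopen (H ×ˢ cylOf s) :=
      (isClopen_discrete H).prod (isClopen_cylOf s)
    set u : X × W d → ℝ := (H ×ˢ cylOf s).indicator (fun _ => (1 : ℝ)) with hu
    have hu_cont : Continuous u :=
      continuous_indicator (by simp [hSclopen.frontier_eq]) continuous_const.continuousOn
    have hu_nonneg : ∀ p, 0 ≤ u p := fun p =>
      Set.indicator_nonneg (fun _ _ => zero_le_one) p
    have hu_meas : Measurable u := measurable_const.indicator hSmeas
    set n : ℕ := s.length with hn
    have hiter : ∀ m : ℕ, ∫ p, u p ∂pl = ∫ p, (Tc c)^[m] u p ∂pl := by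
      intro m
      induction m with
      | zero => simp
      | succ m ih =>
        rw [ih, Function.iterate_succ_apply']
        exact hfix _ (Tc_iter_cont hc hu_cont m)
    have hcont_n : Continuous ((Tc c)^[n] u) := Tc_iter_cont hc hu_cont n
    have hmeas_n : Measurable ((Tc c)^[n] u) := by
      have : n = t.length + 1 := rfl
      rw [this, Function.iterate_succ_apply']
      exact Tc_meas hc (Tc_iter_cont hc hu_cont t.length)
    obtain ⟨C, hC⟩ := isCompact_univ.exists_bound_of_continuousOn hcont_n.continuousOn
    have hint_n : Integrable ((Tc c)^[n] u) pl :=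
      Integrable.mono' (integrable_const C) hmeas_n.aestronglyMeasurable
        (ae_of_all _ fun p => hC p (Set.mem_univ p))
    have hpt : ∀ p, Real.exp (-(M * (n : ℕ))) ≤ (Tc c)^[n] u p := by
      intro p
      have hb := Tc_iter_bound hMc x₀ t a u hu_nonneg p
      have hone : u (x₀, app s p.2) = 1 := by
        have hmem : (x₀, app s p.2) ∈ H ×ˢ cylOf s := ⟨hx₀H, app_mem_cyl s p.2⟩
        simp [hu, Set.indicator_of_mem hmem]
      rw [hone, mul_one] at hb
      exact hb
    have hInt : Real.exp (-(M * (n : ℕ))) ≤ ∫ p, u p ∂pl := by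
      rw [hiter n]
      have hconst : ∫ _p : X × W d, Real.exp (-(M * (n : ℕ))) ∂pl
          = Real.exp (-(M * (n : ℕ))) := by
        simp [integral_const]
      rw [← hconst]
      exact integral_mono (integrable_const _) hint_n hpt
    have hSint : ∫ p, u p ∂pl = (pl (H ×ˢ cylOf s)).toReal := by
      rw [hu, integral_indicator_const (1 : ℝ) hSmeas]
      simp
      rfl
    have hSpos : 0 < pl (H ×ˢ cylOf s) := by
      have hpos : (0 : ℝ) < (pl (H ×ˢ cylOf s)).toReal :=
        lt_of_lt_of_le (Real.exp_pos _) (hSint ▸ hInt)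
      exact (ENNReal.toReal_pos_iff.1 hpos).1
    have final : pl (H ×ˢ cylOf s) ≤ pl ({x₀} ×ˢ cylOf s) := by
      rw [measure_eq_iInf ({x₀} ×ˢ cylOf s)]
      refine le_iInf fun T => le_iInf fun hsub => le_iInf fun hT => measure_mono ?_
      rintro ⟨x, y⟩ ⟨hxH, hyA⟩
      have hsect : MeasurableSet {x' : X | (x', y) ∈ T} :=
        hT.preimage (measurable_prodMk_right)
      have hx₀T : x₀ ∈ {x' : X | (x', y) ∈ T} := hsub ⟨rfl, hyA⟩
      exact Set.sInter_subset_of_mem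
        (show {x' : X | (x', y) ∈ T} ∈ {B : Set X | MeasurableSet B ∧ x₀ ∈ B}
          from ⟨hsect, hx₀T⟩) hxH
    exact lt_of_lt_of_le hSpos final
  have part1 : ∀ (x₀ : X) (s : List (Fin d)), 0 < pl ({x₀} ×ˢ cylOf s) := by
    intro x₀ s
    cases s with
    | nil =>
      obtain ⟨a⟩ := haFin
      refine lt_of_lt_of_le (key x₀ a []) (measure_mono ?_)
      rintro ⟨x, y⟩ ⟨hx, _⟩
      exact ⟨hx, fun i h => by simp at h⟩
    | cons b t => exact key x₀ b t
  refine ⟨part1, ?_⟩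
  rintro U hU ⟨⟨x₀, y⟩, hmem⟩
  have hopen : IsOpen {z : W d | (x₀, z) ∈ U} := hU.preimage (Continuous.prodMk_right x₀)
  obtain ⟨I, v, hIv, hsub⟩ := isOpen_pi_iff.1 hopen y hmem
  set m : ℕ := I.sup id + 1 with hm
  set s : List (Fin d) := List.ofFn (fun i : Fin m => y i) with hsdef
  have hcyl : cylOf s ⊆ {z : W d | (x₀, z) ∈ U} := by
    intro z hz
    apply hsub
    intro i hi
    have hi' : i < m := Nat.lt_succ_of_le (Finset.le_sup (f := id) hi)
    have hlen : i < s.length := by rw [hsdef, List.length_ofFn]; exact hi'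
    have hzi : z i = y i := by
      rw [hz i hlen]
      exact List.get_ofFn (fun i : Fin m => y i) ⟨i, hlen⟩
    rw [hzi]
    exact (hIv i hi).2
  refine lt_of_lt_of_le (part1 x₀ s) (measure_mono ?_)
  rintro ⟨x, z⟩ ⟨hx, hz⟩
  have hxx : x = x₀ := hx
  subst hxx
  exact hcyl hz
end

section
/- Let π ∈ Π(·,σ) have x-marginal μ ∈ P(X) and y-marginal the σ-invariant measure ν. Then H(π) ≤ h(μ) + h(ν), where h(μ) = −∑_{x} μ(x) log μ(x) and h(ν) is the Kolmogorov–Sinai entropy of ν. -/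
open MeasureTheory Filter Topology

attribute [local instance] PiNat.dist

variable {X : Type*} [Fintype X] [MeasurableSpace X] [TopologicalSpace X] {d : ℕ}

lemma cons_shift {d : ℕ} (w : W d) : cons (w 0) (shift w) = w := by
  funext n; cases n <;> rfl

lemma pinat_dist_le_one {d : ℕ} (y z : W d) : dist y z ≤ 1 := by
  by_cases h : y = z
  · subst h; rw [PiNat.dist_self]; norm_num
  · rw [PiNat.dist_eq_of_ne h]
    exact pow_le_one₀ (by norm_num) (by norm_num)

lemma continuous_of_lip {d : ℕ} {g : W d → ℝ} {K : ℝ}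
    (hg : ∀ y z : W d, |g y - g z| ≤ K * dist y z) : Continuous g := by
  rw [continuous_iff_continuousAt]
  intro y
  rw [ContinuousAt, Metric.tendsto_nhds]
  intro ε hε
  set K' : ℝ := max K 1 with hK'
  have hK'pos : 0 < K' := lt_of_lt_of_le one_pos (le_max_right _ _)
  obtain ⟨n, hn⟩ : ∃ n : ℕ, ((1:ℝ)/2) ^ n < ε / K' :=
    exists_pow_lt_of_lt_one (div_pos hε hK'pos) (by norm_num)
  have hopen : IsOpen (PiNat.cylinder y n) := PiNat.isOpen_cylinder _ y n
  filter_upwards [hopen.mem_nhds (PiNat.self_mem_cylinder y n)] with z hz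
  have hdist : dist z y ≤ (1/2 : ℝ)^n := PiNat.mem_cylinder_iff_dist_le.1 hz
  have h0 : (0:ℝ) ≤ dist z y := PiNat.dist_nonneg z y
  have h1 : |g z - g y| ≤ K * dist z y := hg z y
  have h2 : K * dist z y ≤ K' * dist z y :=
    mul_le_mul_of_nonneg_right (le_max_left _ _) h0
  have h3 : K' * dist z y ≤ K' * ((1/2 : ℝ)^n) :=
    mul_le_mul_of_nonneg_left hdist hK'pos.le
  have h4 : K' * ((1/2 : ℝ)^n) < ε := by
    rw [lt_div_iff₀ hK'pos] at hn; linarith [hn]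
  rw [Real.dist_eq]
  linarith

lemma integrable_of_bounded' {α : Type*} [MeasurableSpace α] {μ : Measure α} [IsFiniteMeasure μ]
    {f : α → ℝ} (hf : Measurable f) (C : ℝ) (hC : ∀ a, |f a| ≤ C) : Integrable f μ :=
  (integrable_const C).mono' hf.aestronglyMeasurable
    (Eventually.of_forall (by simpa [Real.norm_eq_abs] using hC))

/-- If `pl ∈ Π(·,σ)` has `x`-marginal `μ` and `y`-marginal `ν`, then
`H(pl) ≤ h(μ) + h(ν)`, where `h(μ) = −∑_x μ(x) log μ(x)` and `h(ν)` is the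
Kolmogorov–Sinai entropy of `ν`, characterized as
`h(ν) = inf { −∫ g dν : g Lipschitz, ∑_{σ w = y} e^{g(w)} = 1 ∀ y }`. -/
theorem entropy_le_sum_of_marginal_entropies
    [Nonempty X] [DiscreteTopology X] [MeasurableSingletonClass X] (hd : 0 < d)
    (pl : Measure (X × W d)) (hpl : IsPlan pl)
    (hKS : ℝ)
    (hKSdef : hKS = sInf {r | ∃ g : W d → ℝ,
      (∃ K : ℝ, ∀ y z : W d, |g y - g z| ≤ K * dist y z) ∧
      (∀ y : W d, ∑ a : Fin d, Real.exp (g (cons a y)) = 1) ∧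
      r = -∫ y, g y ∂(pl.map Prod.snd)}) :
    Hent pl ≤
      (-∑ x : X, ((pl.map Prod.fst) {x}).toReal * Real.log (((pl.map Prod.fst) {x}).toReal))
        + hKS := by
  classical
  obtain ⟨hprob, _⟩ := hpl
  set μ := pl.map Prod.fst with hμdef
  set ν := pl.map Prod.snd with hνdef
  have hμprob : IsProbabilityMeasure μ := Measure.isProbabilityMeasure_map measurable_fst.aemeasurable
  have hμsum : ∑ x : X, (μ {x}).toReal = 1 := by
    have h1 : ∑ x : X, μ {x} = 1 := by
      rw [show (1 : ENNReal) = μ Set.univ from (measure_univ).symm,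
        show (Set.univ : Set X) = ⋃ x ∈ (Finset.univ : Finset X), {x} by
          simp [Set.iUnion_of_singleton]]
      exact (measure_biUnion_finset (fun x _ y _ hxy => by simpa using hxy)
        (fun x _ => measurableSet_singleton x)).symm
    rw [← ENNReal.toReal_sum (fun x _ => measure_ne_top μ _), h1, ENNReal.toReal_one]
  set m : ℝ := (Fintype.card X : ℝ) with hm
  have hmpos : 0 < m := by
    simp only [hm]
    exact_mod_cast Fintype.card_pos
  set A : ℝ := -∑ x : X, (μ {x}).toReal * Real.log ((μ {x}).toReal) with hA
  -- the Hent defining set is bounded below by 0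
  have hbdd : BddBelow {r | ∃ b : X × W d → ℝ, LipCost b ∧ IsNormalized b ∧ r = -∫ p, b p ∂pl} := by
    refine ⟨0, fun r hr => ?_⟩
    obtain ⟨b, _, hbn, rfl⟩ := hr
    have hb0 : ∀ q : X × W d, b q ≤ 0 := by
      intro q
      rw [← Real.exp_le_one_iff]
      calc Real.exp (b q) = Real.exp (b (q.1, cons (q.2 0) (shift q.2))) := by
            rw [cons_shift]
        _ ≤ ∑ a : Fin d, Real.exp (b (q.1, cons a (shift q.2))) :=
            Finset.single_le_sum (f := fun a : Fin d => Real.exp (b (q.1, cons a (shift q.2))))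
              (fun a _ => (Real.exp_pos _).le) (Finset.mem_univ _)
        _ ≤ ∑ x : X, ∑ a : Fin d, Real.exp (b (x, cons a (shift q.2))) :=
            Finset.single_le_sum (f := fun x : X => ∑ a : Fin d, Real.exp (b (x, cons a (shift q.2))))
              (fun x _ => Finset.sum_nonneg fun a _ => (Real.exp_pos _).le) (Finset.mem_univ _)
        _ = 1 := hbn (shift q.2)
    have h2 : ∫ q, b q ∂pl ≤ 0 := integral_nonpos hb0
    simpa using neg_nonneg.2 h2
  -- the key estimate, given any admissible g for the KS entropy
  have key : ∀ g : W d → ℝ, (∀ K : ℝ, True) → True := fun _ _ => trivial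
  have hkey : ∀ (g : W d → ℝ) (K : ℝ), (∀ y z : W d, |g y - g z| ≤ K * dist y z) →
      (∀ y : W d, ∑ a : Fin d, Real.exp (g (cons a y)) = 1) →
      Hent pl ≤ A + -∫ y, g y ∂ν := by
    intro g K hK hgn
    have hgc : Continuous g := continuous_of_lip hK
    have hgm : Measurable g := hgc.measurable
    obtain ⟨y0⟩ : Nonempty (W d) := ⟨fun _ => ⟨0, hd⟩⟩
    have hgb : ∀ y, |g y| ≤ |g y0| + |K| := by
      intro y
      have h1 := hK y y0
      have hd1 : dist y y0 ≤ 1 := pinat_dist_le_one y y0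
      have hd0 : (0:ℝ) ≤ dist y y0 := PiNat.dist_nonneg y y0
      have h2 : K * dist y y0 ≤ |K| * dist y y0 :=
        mul_le_mul_of_nonneg_right (le_abs_self K) hd0
      have h3 : |K| * dist y y0 ≤ |K| * 1 :=
        mul_le_mul_of_nonneg_left hd1 (abs_nonneg K)
      have h4 := abs_sub_abs_le_abs_sub (g y) (g y0)
      linarith [h4, h1, h2, h3]
    have hgint2 : Integrable (fun q : X × W d => g q.2) pl :=
      integrable_of_bounded' (hgm.comp measurable_snd) _ (fun q => hgb q.2)
    have hmap : ∫ y, g y ∂ν = ∫ q, g q.2 ∂pl := by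
      rw [hνdef]
      exact integral_map measurable_snd.aemeasurable hgm.aestronglyMeasurable
    -- step: the perturbed estimate
    have step : ∀ ε ∈ Set.Ioo (0:ℝ) 1, Hent pl + ∫ y, g y ∂ν ≤
        -∑ x : X, (μ {x}).toReal * Real.log ((1-ε) * (μ {x}).toReal + ε / m) := by
      intro ε hε
      set p : X → ℝ := fun x => (1-ε) * (μ {x}).toReal + ε / m with hp
      have hppos : ∀ x, 0 < p x := by
        intro x
        have h1 : 0 ≤ (1-ε) * (μ {x}).toReal :=
          mul_nonneg (by linarith [hε.2]) ENNReal.toReal_nonneg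
        have h2 : 0 < ε / m := div_pos hε.1 hmpos
        simp only [hp]
        linarith
      have hpsum : ∑ x : X, p x = 1 := by
        simp only [hp]
        rw [Finset.sum_add_distrib, ← Finset.mul_sum, hμsum, Finset.sum_const,
          Finset.card_univ, nsmul_eq_mul]
        rw [hm]
        field_simp
        ring
      set b : X × W d → ℝ := fun q => g q.2 + Real.log (p q.1) with hb
      have hbLip : LipCost b := ⟨K, fun x y z => by simpa [hb] using hK y z⟩
      have hbn : IsNormalized b := by
        intro y
        have hx : ∀ x : X, ∑ a : Fin d, Real.exp (b (x, cons a y)) = p x := by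
          intro x
          calc ∑ a : Fin d, Real.exp (b (x, cons a y))
              = ∑ a : Fin d, Real.exp (g (cons a y)) * p x := by
                refine Finset.sum_congr rfl fun a _ => ?_
                simp only [hb]
                rw [Real.exp_add, Real.exp_log (hppos x)]
            _ = (∑ a : Fin d, Real.exp (g (cons a y))) * p x := by rw [Finset.sum_mul]
            _ = p x := by rw [hgn y, one_mul]
        rw [Finset.sum_congr rfl fun x _ => hx x, hpsum]
      have hpm : Measurable fun q : X × W d => Real.log (p q.1) :=
        (measurable_of_finite (fun x => Real.log (p x))).comp measurable_fst
      have hC : ∀ x : X, |Real.log (p x)| ≤ ∑ x : X, |Real.log (p x)| := fun x =>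
        Finset.single_le_sum (f := fun x : X => |Real.log (p x)|)
          (fun i _ => abs_nonneg _) (Finset.mem_univ x)
      have hbint1 : Integrable (fun q : X × W d => Real.log (p q.1)) pl :=
        integrable_of_bounded' hpm _ (fun q => hC q.1)
      have hint_eq : ∫ q, b q ∂pl =
          (∫ q, g q.2 ∂pl) + ∑ x : X, (μ {x}).toReal * Real.log (p x) := by
        have h1 : ∫ q, b q ∂pl = (∫ q, g q.2 ∂pl) + ∫ q, Real.log (p q.1) ∂pl :=
          integral_add hgint2 hbint1
        rw [h1]
        congr 1
        have h2 : ∫ q, Real.log (p q.1) ∂pl = ∫ x, Real.log (p x) ∂μ := by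
          rw [hμdef]
          exact (integral_map (f := fun x => Real.log (p x)) measurable_fst.aemeasurable
            (measurable_of_finite _).aestronglyMeasurable).symm
        rw [h2, integral_fintype (μ := μ) (f := fun x => Real.log (p x))
          (integrable_of_bounded' (measurable_of_finite _) _ hC)]
        simp [smul_eq_mul, measureReal_def]
      have hmem : (-∫ q, b q ∂pl) ∈
          {r | ∃ b' : X × W d → ℝ, LipCost b' ∧ IsNormalized b' ∧ r = -∫ p, b' p ∂pl} :=
        ⟨b, hbLip, hbn, rfl⟩
      have h2 : Hent pl ≤ -∫ q, b q ∂pl := csInf_le hbdd hmem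
      rw [hint_eq] at h2
      rw [hmap]
      simp only [hp] at h2 ⊢
      linarith
    have tend : Tendsto
        (fun ε : ℝ => -∑ x : X, (μ {x}).toReal * Real.log ((1-ε) * (μ {x}).toReal + ε / m))
        (𝓝[>] (0:ℝ)) (𝓝 A) := by
      rw [hA]
      apply Tendsto.neg
      apply tendsto_finset_sum
      intro x _
      by_cases hx : (μ {x}).toReal = 0
      · simp only [hx, zero_mul]
        exact tendsto_const_nhds
      · apply Tendsto.const_mul
        have hcont : Continuous fun ε : ℝ => (1-ε) * (μ {x}).toReal + ε / m := by
          fun_prop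
        have h1 := hcont.tendsto 0
        have h0 : (1-(0:ℝ)) * (μ {x}).toReal + 0 / m = (μ {x}).toReal := by ring
        rw [h0] at h1
        exact (Real.continuousAt_log hx).tendsto.comp (h1.mono_left nhdsWithin_le_nhds)
    have final : Hent pl + ∫ y, g y ∂ν ≤ A := by
      refine ge_of_tendsto tend ?_
      filter_upwards [Ioo_mem_nhdsGT_of_mem (Set.mem_Ico.2 ⟨le_refl (0:ℝ), one_pos⟩)] with ε hε
      exact step ε hε
    linarith
  -- conclude
  rw [hKSdef]
  have hSne : {r | ∃ g : W d → ℝ,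
      (∃ K : ℝ, ∀ y z : W d, |g y - g z| ≤ K * dist y z) ∧
      (∀ y : W d, ∑ a : Fin d, Real.exp (g (cons a y)) = 1) ∧
      r = -∫ y, g y ∂ν}.Nonempty := by
    refine ⟨-∫ y : W d, (-Real.log d) ∂ν, fun _ => -Real.log d, ⟨0, fun y z => by simp⟩, ?_, rfl⟩
    intro y
    rw [Finset.sum_const, Finset.card_univ, Fintype.card_fin, Real.exp_neg,
      Real.exp_log (by exact_mod_cast hd), nsmul_eq_mul]
    exact mul_inv_cancel₀ (by exact_mod_cast hd.ne')
  have hlow : ∀ r ∈ {r | ∃ g : W d → ℝ,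
      (∃ K : ℝ, ∀ y z : W d, |g y - g z| ≤ K * dist y z) ∧
      (∀ y : W d, ∑ a : Fin d, Real.exp (g (cons a y)) = 1) ∧
      r = -∫ y, g y ∂ν}, Hent pl - A ≤ r := by
    rintro r ⟨g, ⟨K, hK⟩, hgn, rfl⟩
    have := hkey g K hK hgn
    linarith
  have := le_csInf hSne hlow
  linarith
end

section
/- Let c be a Lipschitz cost and μ ∈ P(X) with full support. Define Φ_c as the set of pairs of continuous functions (φ,ψ) ∈ C(X) × C(Ω) such that φ(x) − ψ(y) + ψ(σ(y)) ≥ c(x,y) − b(x,y) for all (x,y), for some Lipschitz b with P(b) = 0. Then inf over (φ,ψ) ∈ Φ_c of ∫_X φ dμ equals inf over continuous φ : X → ℝ with P(c − φ) = 0 of ∫_X φ dμ. -/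
open MeasureTheory Filter Topology

attribute [local instance] PiNat.dist

variable {X : Type*} [Fintype X] [MeasurableSpace X] [TopologicalSpace X] {d : ℕ}

/-! ### Auxiliary lemmas -/

section Aux
set_option linter.unusedSectionVars false

instance (priority := 100) [MeasurableSingletonClass X] : OpensMeasurableSpace X :=
  ⟨fun s _ => s.toFinite.measurableSet⟩

lemma continuous_shift : Continuous (shift (d := d)) :=
  continuous_pi fun n => continuous_apply (n + 1)

lemma LipCost.continuous_slice {b : X × W d → ℝ} (hb : LipCost b) (x : X) :
    Continuous fun y => b (x, y) := by
  obtain ⟨K, hK⟩ := hb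
  rw [continuous_iff_continuousAt]
  intro y
  rw [ContinuousAt, Metric.tendsto_nhds]
  intro ε hε
  have hhalf : (0:ℝ) < 1/2 := by norm_num
  obtain ⟨n, hn⟩ : ∃ n : ℕ, (1/2 : ℝ) ^ n < ε / (max K 1) := by
    refine exists_pow_lt_of_lt_one (by positivity) (by norm_num)
  filter_upwards [(PiNat.isOpen_cylinder (E := fun _ => Fin d) y n).mem_nhds
    (PiNat.self_mem_cylinder y n)] with z hz
  have h1 : dist z y ≤ (1/2 : ℝ) ^ n := PiNat.mem_cylinder_iff_dist_le.1 hz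
  have h2 : |b (x, z) - b (x, y)| ≤ max K 1 * dist z y := by
    refine (hK x z y).trans ?_
    exact mul_le_mul_of_nonneg_right (le_max_left _ _) (PiNat.dist_nonneg _ _)
  have h3 : max K 1 * dist z y ≤ max K 1 * (1/2:ℝ)^n :=
    mul_le_mul_of_nonneg_left h1 (le_trans (by norm_num) (le_max_right K 1))
  have h4 : max K 1 * (1/2:ℝ)^n < ε := by
    have hKpos : (0:ℝ) < max K 1 := lt_of_lt_of_le one_pos (le_max_right K 1)
    calc max K 1 * (1/2:ℝ)^n < max K 1 * (ε / max K 1) := by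
          exact mul_lt_mul_of_pos_left hn hKpos
      _ = ε := by field_simp
  rw [Real.dist_eq]
  linarith

lemma LipCost.continuous [DiscreteTopology X] {b : X × W d → ℝ} (hb : LipCost b) :
    Continuous b := by
  classical
  have hrepr : b = fun p : X × W d =>
      ∑ x : X, (if p.1 = x then (1:ℝ) else 0) * b (x, p.2) := by
    funext p
    rw [Finset.sum_eq_single p.1]
    · simp
    · intro x' _ hx'
      rw [if_neg fun h => hx' h.symm, zero_mul]
    · simp
  rw [hrepr]
  refine continuous_finset_sum _ fun x _ => Continuous.mul ?_ ?_
  · exact (continuous_of_discreteTopology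
      (f := fun x' : X => if x' = x then (1:ℝ) else 0)).comp continuous_fst
  · exact (hb.continuous_slice x).comp continuous_snd

lemma bound_of_continuous [Nonempty X] (hd : 0 < d) {f : X × W d → ℝ} (hf : Continuous f) :
    ∃ M : ℝ, 0 ≤ M ∧ ∀ p, |f p| ≤ M := by
  haveI : Nonempty (Fin d) := ⟨⟨0, hd⟩⟩
  obtain ⟨M, hM⟩ := (isCompact_range hf.abs).bddAbove
  refine ⟨M, le_trans (abs_nonneg _) (hM ⟨Classical.arbitrary _, rfl⟩), fun p => hM ⟨p, rfl⟩⟩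

lemma integrable_of_continuous [DiscreteTopology X] [MeasurableSingletonClass X] [Nonempty X]
    (hd : 0 < d) {f : X × W d → ℝ} (hf : Continuous f)
    (π : Measure (X × W d)) [IsFiniteMeasure π] : Integrable f π := by
  obtain ⟨M, _, hM⟩ := bound_of_continuous hd hf
  exact (integrable_const M).mono' hf.aestronglyMeasurable
    (Filter.Eventually.of_forall fun p => by simpa [Real.norm_eq_abs] using hM p)

lemma integrable_fintype [MeasurableSingletonClass X] [Nonempty X]
    (φ : X → ℝ) (μ : Measure X) [IsFiniteMeasure μ] : Integrable φ μ := by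
  obtain ⟨M, hM⟩ := (Set.finite_range fun x => |φ x|).bddAbove
  exact (integrable_const M).mono' (measurable_of_countable φ).aestronglyMeasurable
    (Filter.Eventually.of_forall fun x => by simpa [Real.norm_eq_abs] using hM ⟨x, rfl⟩)

lemma integral_dirac_cont [DiscreteTopology X] [MeasurableSingletonClass X]
    {f : X × W d → ℝ} (hf : Continuous f) (p : X × W d) :
    ∫ q, f q ∂(Measure.dirac p) = f p :=
  integral_dirac' f p hf.stronglyMeasurable

lemma isPlan_dirac [DiscreteTopology X] [MeasurableSingletonClass X]
    (x : X) {y : W d} (hy : shift y = y) :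
    IsPlan (Measure.dirac (x, y)) := by
  refine ⟨inferInstance, fun g hg => ?_⟩
  rw [integral_dirac_cont (f := fun p : X × W d => g (shift p.2))
      (hg.comp (continuous_shift.comp continuous_snd)) (x, y),
    integral_dirac_cont (f := fun p : X × W d => g p.2) (hg.comp continuous_snd) (x, y)]
  simp [hy]

lemma normalized_le_zero {b : X × W d → ℝ} (hb : IsNormalized b) (p : X × W d) : b p ≤ 0 := by
  obtain ⟨x, w⟩ := p
  have hw : cons (w 0) (shift w) = w := by
    funext n; cases n <;> rfl
  have h2 : Real.exp (b (x, cons (w 0) (shift w))) ≤ 1 := by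
    calc Real.exp (b (x, cons (w 0) (shift w)))
        ≤ ∑ a : Fin d, Real.exp (b (x, cons a (shift w))) :=
          Finset.single_le_sum (f := fun a : Fin d => Real.exp (b (x, cons a (shift w))))
            (fun a _ => (Real.exp_pos _).le) (Finset.mem_univ _)
      _ ≤ ∑ x' : X, ∑ a : Fin d, Real.exp (b (x', cons a (shift w))) :=
          Finset.single_le_sum
            (f := fun x' : X => ∑ a : Fin d, Real.exp (b (x', cons a (shift w))))
            (fun x' _ => Finset.sum_nonneg fun a _ => (Real.exp_pos _).le) (Finset.mem_univ _)
      _ = 1 := hb (shift w)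
  rw [hw] at h2
  exact Real.exp_le_one_iff.1 h2

lemma hent_nonneg (π : Measure (X × W d)) : 0 ≤ Hent π := by
  apply Real.sInf_nonneg
  rintro r ⟨b, -, hbn, rfl⟩
  have h : ∫ p, b p ∂π ≤ 0 := integral_nonpos fun p => normalized_le_zero hbn p
  linarith

lemma normalized_const [Nonempty X] (hd : 0 < d) :
    IsNormalized (fun _ : X × W d => -Real.log ((Fintype.card X : ℝ) * d)) := by
  intro y
  have hX : (0:ℝ) < Fintype.card X := by
    exact_mod_cast Fintype.card_pos
  have hpos : (0:ℝ) < (Fintype.card X : ℝ) * d := by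
    have : (0:ℝ) < (d:ℝ) := by exact_mod_cast hd
    positivity
  simp only [Finset.sum_const, Finset.card_univ, Fintype.card_fin, nsmul_eq_mul,
    Real.exp_neg, Real.exp_log hpos]
  field_simp

lemma hent_le [Nonempty X] (hd : 0 < d)
    (π : Measure (X × W d)) [IsProbabilityMeasure π] :
    Hent π ≤ Real.log ((Fintype.card X : ℝ) * d) := by
  apply csInf_le
  · refine ⟨0, ?_⟩
    rintro r ⟨b, -, hbn, rfl⟩
    have h : ∫ p, b p ∂π ≤ 0 := integral_nonpos fun p => normalized_le_zero hbn p
    linarith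
  · refine ⟨fun _ => -Real.log ((Fintype.card X : ℝ) * d), ⟨0, fun x y z => by
      simp [PiNat.dist_nonneg]⟩, normalized_const hd, ?_⟩
    rw [integral_const]
    simp

lemma pr_bddAbove [DiscreteTopology X] [MeasurableSingletonClass X] [Nonempty X] (hd : 0 < d)
    {c' : X × W d → ℝ} (hc' : Continuous c') :
    BddAbove {r | ∃ π : Measure (X × W d), IsPlan π ∧ r = ∫ p, c' p ∂π + Hent π} := by
  obtain ⟨M, hM0, hM⟩ := bound_of_continuous hd hc'
  refine ⟨M + Real.log ((Fintype.card X : ℝ) * d), ?_⟩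
  rintro r ⟨π, ⟨hπ1, -⟩, rfl⟩
  haveI := hπ1
  have h1 : ∫ p, c' p ∂π ≤ M := by
    have h := norm_integral_le_of_norm_le_const (f := c') (μ := π) (C := M)
      (Filter.Eventually.of_forall fun p => by simpa [Real.norm_eq_abs] using hM p)
    rw [probReal_univ, mul_one, Real.norm_eq_abs] at h
    exact (le_abs_self _).trans h
  have h2 := hent_le hd π
  exact add_le_add h1 h2

lemma pr_le_of_plans [DiscreteTopology X] [MeasurableSingletonClass X] [Nonempty X] (hd : 0 < d)
    {c' : X × W d → ℝ} (hc' : Continuous c')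
    {π : Measure (X × W d)} (hπ : IsPlan π) :
    ∫ p, c' p ∂π + Hent π ≤ Pr c' :=
  le_csSup (pr_bddAbove hd hc') ⟨π, hπ, rfl⟩

lemma pr_add_const [DiscreteTopology X] [MeasurableSingletonClass X] [Nonempty X] (hd : 0 < d)
    {c' : X × W d → ℝ} (hc' : Continuous c') (t : ℝ) :
    Pr (fun p => c' p + t) = Pr c' + t := by
  classical
  obtain ⟨x₀⟩ := ‹Nonempty X›
  have hybar : shift (fun _ => (⟨0, hd⟩ : Fin d)) = fun _ => (⟨0, hd⟩ : Fin d) := rfl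
  have hne : Set.Nonempty {r | ∃ π : Measure (X × W d), IsPlan π ∧ r = ∫ p, c' p ∂π + Hent π} :=
    ⟨_, Measure.dirac (x₀, fun _ => (⟨0, hd⟩ : Fin d)), isPlan_dirac x₀ hybar, rfl⟩
  have hbdd := pr_bddAbove hd hc'
  have hset : {r | ∃ π : Measure (X × W d), IsPlan π ∧ r = ∫ p, (c' p + t) ∂π + Hent π}
      = (fun s => s + t) '' {r | ∃ π : Measure (X × W d), IsPlan π ∧ r = ∫ p, c' p ∂π + Hent π} := by
    ext r
    constructor
    · rintro ⟨π, hπ, rfl⟩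
      haveI := hπ.1
      refine ⟨∫ p, c' p ∂π + Hent π, ⟨π, hπ, rfl⟩, ?_⟩
      rw [integral_add (integrable_of_continuous hd hc' π) (integrable_const t), integral_const,
        probReal_univ, one_smul]
      ring
    · rintro ⟨s, ⟨π, hπ, rfl⟩, rfl⟩
      haveI := hπ.1
      refine ⟨π, hπ, ?_⟩
      rw [integral_add (integrable_of_continuous hd hc' π) (integrable_const t), integral_const,
        probReal_univ, one_smul]
      ring
  rw [Pr, Pr, hset]
  exact (Monotone.map_csSup_of_continuousAt
    (f := fun s : ℝ => s + t) ((continuous_id.add continuous_const).continuousAt)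
    (fun a b h => add_le_add_left h t) hne hbdd).symm

end Aux

/-- The infimum of `∫ φ dμ` over admissible pairs `(φ,ψ) ∈ Φ_c` equals the infimum of
`∫ φ dμ` over the functions `φ` with `P(c − φ) = 0`. -/
theorem inf_over_admissible_pairs_eq_inf_over_zero_pressure
    [Nonempty X] [DiscreteTopology X] [MeasurableSingletonClass X] (hd : 0 < d)
    (c : X × W d → ℝ) (hc : LipCost c)
    (μ : Measure X) (hμ : IsProbabilityMeasure μ) (hfull : ∀ x : X, 0 < μ {x}) :
    sInf {r | ∃ (φ : X → ℝ) (ψ : W d → ℝ), Continuous ψ ∧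
        (∃ b : X × W d → ℝ, LipCost b ∧ Pr b = 0 ∧
          ∀ (x : X) (y : W d),
            φ x - ψ y + ψ (shift y) ≥ c (x, y) - b (x, y)) ∧
        r = ∫ x, φ x ∂μ}
      = sInf {r | ∃ φ : X → ℝ,
          Pr (fun p : X × W d => c p - φ p.1) = 0 ∧ r = ∫ x, φ x ∂μ} := by
  classical
  obtain ⟨x₀⟩ := ‹Nonempty X›
  set ybar : W d := fun _ => (⟨0, hd⟩ : Fin d) with hybar_def
  have hshift : shift ybar = ybar := rfl
  have hcc : Continuous c := hc.continuous
  obtain ⟨M, hM0, hM⟩ := bound_of_continuous hd hcc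
  set A := {r | ∃ (φ : X → ℝ) (ψ : W d → ℝ), Continuous ψ ∧
        (∃ b : X × W d → ℝ, LipCost b ∧ Pr b = 0 ∧
          ∀ (x : X) (y : W d),
            φ x - ψ y + ψ (shift y) ≥ c (x, y) - b (x, y)) ∧
        r = ∫ x, φ x ∂μ} with hA_def
  set B := {r | ∃ φ : X → ℝ,
          Pr (fun p : X × W d => c p - φ p.1) = 0 ∧ r = ∫ x, φ x ∂μ} with hB_def
  -- B ⊆ A
  have hBA : B ⊆ A := by
    rintro r ⟨φ, hφP, rfl⟩
    refine ⟨φ, fun _ => 0, continuous_const,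
      ⟨fun p => c p - φ p.1, ?_, hφP, fun x y => by simp⟩, rfl⟩
    obtain ⟨K, hK⟩ := hc
    refine ⟨K, fun x y z => ?_⟩
    have h := hK x y z
    have : c (x, y) - φ x - (c (x, z) - φ x) = c (x, y) - c (x, z) := by ring
    simpa [this] using h
  -- every element of A dominates an element of B
  have hKey : ∀ r ∈ A, ∃ r' ∈ B, r' ≤ r := by
    rintro r ⟨φ, ψ, hψ, ⟨b, hbL, hbP, hineq⟩, rfl⟩
    have hφc : Continuous fun p : X × W d => φ p.1 :=
      (continuous_of_discreteTopology (f := φ)).comp continuous_fst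
    have hcφ : Continuous fun p : X × W d => c p - φ p.1 := hcc.sub hφc
    have hbc : Continuous b := hbL.continuous
    -- Pr (c - φ) ≤ 0
    have ht : Pr (fun p : X × W d => c p - φ p.1) ≤ 0 := by
      apply Real.sSup_nonpos
      rintro r ⟨π, hπ, rfl⟩
      haveI := hπ.1
      have hintb : Integrable b π := integrable_of_continuous hd hbc π
      have hintc : Integrable (fun p : X × W d => c p - φ p.1) π :=
        integrable_of_continuous hd hcφ π
      have hintψ1 : Integrable (fun p : X × W d => ψ p.2) π :=
        integrable_of_continuous hd (hψ.comp continuous_snd) π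
      have hintψ2 : Integrable (fun p : X × W d => ψ (shift p.2)) π :=
        integrable_of_continuous hd ((hψ.comp continuous_shift).comp continuous_snd) π
      have hintdiff : Integrable (fun p : X × W d => ψ (shift p.2) - ψ p.2) π :=
        integrable_of_continuous hd
          ((hψ.comp (continuous_shift.comp continuous_snd)).sub (hψ.comp continuous_snd)) π
      have hmono : ∫ p, (c p - φ p.1) ∂π
          ≤ ∫ p, (b p + (ψ (shift p.2) - ψ p.2)) ∂π := by
        refine integral_mono hintc (hintb.add hintdiff) fun p => ?_
        have h := hineq p.1 p.2
        simp only
        linarith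
      rw [integral_add hintb hintdiff, integral_sub hintψ2 hintψ1,
        hπ.2 ψ hψ, sub_self, add_zero] at hmono
      have h2 : ∫ p, b p ∂π + Hent π ≤ Pr b := pr_le_of_plans hd hbc hπ
      rw [hbP] at h2
      linarith
    set t := Pr (fun p : X × W d => c p - φ p.1) with ht_def
    have hPr' : Pr (fun p : X × W d => c p - (φ p.1 + t)) = 0 := by
      have heq : (fun p : X × W d => c p - (φ p.1 + t))
          = fun p : X × W d => (c p - φ p.1) + (-t) := by
        funext p; ring
      rw [heq, pr_add_const hd hcφ (-t), ← ht_def]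
      ring
    have hφint : Integrable φ μ := integrable_fintype φ μ
    refine ⟨∫ x, (φ x + t) ∂μ, ⟨fun x => φ x + t, hPr', rfl⟩, ?_⟩
    rw [integral_add hφint (integrable_const t), integral_const, probReal_univ,
      one_smul]
    linarith
  -- A is bounded below
  have hAbdd : BddBelow A := by
    refine ⟨-M, ?_⟩
    rintro r ⟨φ, ψ, hψ, ⟨b, hbL, hbP, hineq⟩, rfl⟩
    have hbc : Continuous b := hbL.continuous
    have hb0 : ∀ x : X, b (x, ybar) ≤ 0 := by
      intro x
      have hplan : IsPlan (Measure.dirac (x, ybar)) := isPlan_dirac x hshift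
      have h2 : ∫ p, b p ∂(Measure.dirac (x, ybar)) + Hent (Measure.dirac (x, ybar)) ≤ Pr b :=
        pr_le_of_plans hd hbc hplan
      rw [hbP, integral_dirac_cont hbc] at h2
      have h3 := hent_nonneg (Measure.dirac (x, ybar))
      linarith
    have hφ : ∀ x : X, -M ≤ φ x := by
      intro x
      have h := hineq x ybar
      rw [hshift] at h
      have h1 := (abs_le.1 (hM (x, ybar))).1
      have h2 := hb0 x
      linarith
    have hφint : Integrable φ μ := integrable_fintype φ μ
    calc -M = ∫ _, (-M : ℝ) ∂μ := by
          rw [integral_const, probReal_univ, one_smul]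
      _ ≤ ∫ x, φ x ∂μ := integral_mono (integrable_const _) hφint hφ
  -- A is nonempty
  have hAne : A.Nonempty := by
    set k : ℝ := -Pr (fun _ : X × W d => (0:ℝ)) with hk_def
    have hPrb : Pr (fun _ : X × W d => k) = 0 := by
      have h := pr_add_const hd (continuous_const :
        Continuous fun _ : X × W d => (0:ℝ)) k
      have heq : (fun _ : X × W d => (0:ℝ) + k) = fun _ : X × W d => k := by
        funext p; ring
      rw [heq] at h
      rw [h, hk_def]
      ring
    refine ⟨∫ _, (M - k) ∂μ, fun _ => M - k, fun _ => 0, continuous_const,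
      ⟨fun _ => k, ⟨0, fun x y z => by simp⟩, hPrb, fun x y => ?_⟩, rfl⟩
    have h1 := (abs_le.1 (hM (x, y))).2
    show M - k - 0 + 0 ≥ c (x, y) - k
    linarith
  have hBne : B.Nonempty := by
    obtain ⟨r, hr⟩ := hAne
    obtain ⟨r', hr', -⟩ := hKey r hr
    exact ⟨r', hr'⟩
  have hBbdd : BddBelow B := hAbdd.mono hBA
  apply le_antisymm
  · exact csInf_le_csInf hAbdd hBne hBA
  · refine le_csInf hAne fun r hr => ?_
    obtain ⟨r', hr', hle⟩ := hKey r hr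
    exact (csInf_le hBbdd hr').trans hle
end
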